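/- With t_0 = g_1, t_1 = (g_0+g_2)/2, t_i = g_{i+1}/2 (i ≥ 2) built from the Grünwald–Letnikov coefficients for 1 < α < 2, the symmetric Toeplitz matrix T_0 = [t_{|j-k|}] is negative semidefinite for every size; equivalently −T_0 is positive semidefinite. -/

import Mathlib

/-- Grünwald–Letnikov coefficients: g 0 = 1, g (k+1) = -((α - k)/(k+1)) * g k. -/
noncomputable def glCoeff (α : ℝ) : ℕ → ℝ
  | 0 => 1
  | k + 1 => -((α - k) / (k + 1)) * glCoeff α k

/-- The symbol coefficients t_0 = g_1, t_1 = (g_0+g_2)/2, t_i = g_{i+1}/2 for i ≥ 2. -/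
noncomputable def tCoeff (α : ℝ) : ℕ → ℝ
  | 0 => glCoeff α 1
  | 1 => (glCoeff α 0 + glCoeff α 2) / 2
  | i + 2 => glCoeff α (i + 3) / 2

/-- The symmetric Toeplitz matrix T_0 = [t_{|j-k|}]. -/
noncomputable def T0 (α : ℝ) (m : ℕ) : Matrix (Fin m) (Fin m) ℝ :=
  Matrix.of fun j k => tCoeff α ((j : ℤ) - (k : ℤ)).natAbs

/-- Partial sums of GL coefficients: Sa α n = ∑_{k=0}^n g_k, given by a closed recursion. -/
noncomputable def Sa (α : ℝ) : ℕ → ℝ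
  | 0 => 1
  | n + 1 => ((n + 1 - α) / (n + 1)) * Sa α n

lemma gl_succ (α : ℝ) (n : ℕ) : glCoeff α (n + 1) = -α / (n + 1) * Sa α n := by
  induction n with
  | zero => simp [glCoeff, Sa]
  | succ n ih =>
    show -((α - (n + 1 : ℕ)) / ((n + 1 : ℕ) + 1)) * glCoeff α (n + 1) = _
    rw [ih]
    show _ = -α / ((n + 1 : ℕ) + 1) * (((n + 1 - α) / (n + 1)) * Sa α n)
    have h1 : (n : ℝ) + 1 ≠ 0 := by positivity
    have h2 : (n : ℝ) + 1 + 1 ≠ 0 := by positivity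
    push_cast
    field_simp
    ring

lemma Sa_step (α : ℝ) (n : ℕ) : Sa α (n + 1) = Sa α n + glCoeff α (n + 1) := by
  rw [gl_succ]
  show ((n + 1 - α) / (n + 1)) * Sa α n = _
  have h1 : (n : ℝ) + 1 ≠ 0 := by positivity
  field_simp
  ring

lemma Sa_neg (α : ℝ) (hα1 : 1 < α) (hα2 : α < 2) : ∀ n, 1 ≤ n → Sa α n < 0 := by
  intro n hn
  induction n with
  | zero => omega
  | succ n ih =>
    rcases Nat.eq_zero_or_pos n with h0 | h1
    · subst h0
      have h : Sa α 1 = (((0:ℕ) + 1 - α) / ((0:ℕ) + 1)) * Sa α 0 := rfl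
      rw [h]
      simp [Sa]
      linarith
    · have hS := ih h1
      show (((n : ℝ) + 1 - α) / ((n : ℝ) + 1)) * Sa α n < 0
      have hnum : 0 < (n : ℝ) + 1 - α := by
        have : (1 : ℝ) ≤ (n : ℝ) := by exact_mod_cast h1
        linarith
      have hden : 0 < (n : ℝ) + 1 := by positivity
      exact mul_neg_of_pos_of_neg (div_pos hnum hden) hS

lemma gl_pos (α : ℝ) (hα1 : 1 < α) (hα2 : α < 2) : ∀ n, 1 ≤ n → 0 < glCoeff α (n + 1) := by
  intro n hn
  rw [gl_succ]
  have hS := Sa_neg α hα1 hα2 n hn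
  have h1 : -α / ((n : ℝ) + 1) < 0 := by
    apply div_neg_of_neg_of_pos <;> [linarith; positivity]
  exact mul_pos_of_neg_of_neg h1 hS

lemma t_pos (α : ℝ) (hα1 : 1 < α) (hα2 : α < 2) : ∀ d, 1 ≤ d → 0 < tCoeff α d := by
  intro d hd
  match d, hd with
  | 1, _ =>
    show 0 < (glCoeff α 0 + glCoeff α 2) / 2
    have h2 : 0 < glCoeff α 2 := gl_pos α hα1 hα2 1 le_rfl
    have h0 : glCoeff α 0 = 1 := rfl
    rw [h0]; linarith
  | (i + 2), _ =>
    show 0 < glCoeff α (i + 3) / 2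
    have := gl_pos α hα1 hα2 (i + 2) (by omega)
    have h : i + 2 + 1 = i + 3 := by omega
    rw [h] at this
    linarith

lemma t_zero (α : ℝ) : tCoeff α 0 = -α := by
  show glCoeff α 1 = -α
  rw [gl_succ]
  simp [Sa]

lemma sum_t (α : ℝ) : ∀ N, 1 ≤ N →
    ∑ d ∈ Finset.Icc 1 N, tCoeff α d = (α + Sa α (N + 1)) / 2 := by
  intro N hN
  induction N with
  | zero => omega
  | succ N ih =>
    rcases Nat.eq_zero_or_pos N with h0 | h1
    · subst h0
      simp only [Finset.Icc_self, Finset.sum_singleton]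
      show (glCoeff α 0 + glCoeff α 2) / 2 = _
      rw [Sa_step α 1, show glCoeff α 0 = 1 from rfl]
      have h : Sa α 1 = (((0:ℕ) + 1 - α) / ((0:ℕ) + 1)) * Sa α 0 := rfl
      rw [h]
      simp [Sa]
      ring
    · have hIcc : Finset.Icc 1 (N + 1) = insert (N + 1) (Finset.Icc 1 N) := by
        ext d; simp only [Finset.mem_Icc, Finset.mem_insert]; omega
      rw [hIcc, Finset.sum_insert (by simp), ih h1, Sa_step α (N + 1)]
      have ht : tCoeff α (N + 1) = glCoeff α (N + 2) / 2 := by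
        match N, h1 with
        | (n + 1), _ => rfl
      rw [ht]
      ring

/-- A real symmetric weakly diagonally dominant matrix is positive semidefinite. -/
lemma diag_dom_posSemidef {n : ℕ} (A : Matrix (Fin n) (Fin n) ℝ)
    (hsym : ∀ i j, A i j = A j i)
    (hdom : ∀ i, ∑ j ∈ Finset.univ.erase i, |A i j| ≤ A i i) :
    A.PosSemidef := by
  rw [Matrix.posSemidef_iff_dotProduct_mulVec]
  constructor
  · ext i j
    simp [Matrix.conjTranspose_apply, hsym i j]
  · intro x
    have hQ : dotProduct (star x) (A.mulVec x)
        = ∑ i, (A i i * x i ^ 2 + ∑ j ∈ Finset.univ.erase i, x i * (A i j * x j)) := by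
      simp only [star_trivial, dotProduct, Matrix.mulVec, Finset.mul_sum]
      refine Finset.sum_congr rfl fun i _ => ?_
      rw [← Finset.add_sum_erase _ _ (Finset.mem_univ i)]
      ring_nf
    rw [hQ]
    set T : ℝ := ∑ i, ∑ j ∈ Finset.univ.erase i,
        (|A i j| * |x i| ^ 2 - |A i j| * (|x i| * |x j|)) with hT
    have hswap : T = ∑ i, ∑ j ∈ Finset.univ.erase i,
        (|A i j| * |x j| ^ 2 - |A i j| * (|x j| * |x i|)) := by
      rw [hT,
        Finset.sum_comm' (s := Finset.univ) (t := fun i => Finset.univ.erase i)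
          (t' := Finset.univ) (s' := fun j => Finset.univ.erase j)
          (by intro a b; simp [Finset.mem_erase]; exact ne_comm)]
      refine Finset.sum_congr rfl fun i _ => Finset.sum_congr rfl fun j hj => ?_
      rw [hsym j i]
    have hTnonneg : 0 ≤ T := by
      have h2 : 2 * T = ∑ i, ∑ j ∈ Finset.univ.erase i,
          (|A i j| * (|x i| - |x j|) ^ 2) := by
        rw [two_mul]
        nth_rw 2 [hswap]
        rw [← Finset.sum_add_distrib]
        refine Finset.sum_congr rfl fun i _ => ?_
        rw [← Finset.sum_add_distrib]
        refine Finset.sum_congr rfl fun j _ => ?_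
        ring
      have : 0 ≤ 2 * T := by
        rw [h2]
        refine Finset.sum_nonneg fun i _ => Finset.sum_nonneg fun j _ => ?_
        positivity
      linarith
    refine le_trans hTnonneg ?_
    rw [hT]
    refine Finset.sum_le_sum fun i _ => ?_
    have h1 : ∑ j ∈ Finset.univ.erase i, |A i j| * |x i| ^ 2 ≤ A i i * x i ^ 2 := by
      rw [← Finset.sum_mul]
      rw [show |x i| ^ 2 = x i ^ 2 from sq_abs (x i)]
      exact mul_le_mul_of_nonneg_right (hdom i) (sq_nonneg _)
    have h2 : ∑ j ∈ Finset.univ.erase i, (-(|A i j| * (|x i| * |x j|)))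
        ≤ ∑ j ∈ Finset.univ.erase i, x i * (A i j * x j) := by
      refine Finset.sum_le_sum fun j _ => ?_
      have := neg_abs_le (x i * (A i j * x j))
      calc -(|A i j| * (|x i| * |x j|)) = -|x i * (A i j * x j)| := by
            rw [abs_mul, abs_mul]; ring
        _ ≤ x i * (A i j * x j) := neg_abs_le _
    calc ∑ j ∈ Finset.univ.erase i, (|A i j| * |x i| ^ 2 - |A i j| * (|x i| * |x j|))
        = ∑ j ∈ Finset.univ.erase i, |A i j| * |x i| ^ 2
          + ∑ j ∈ Finset.univ.erase i, (-(|A i j| * (|x i| * |x j|))) := by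
          rw [← Finset.sum_add_distrib]
          exact Finset.sum_congr rfl fun j _ => by ring
      _ ≤ A i i * x i ^ 2 + ∑ j ∈ Finset.univ.erase i, x i * (A i j * x j) :=
          add_le_add h1 h2

theorem T0_neg_semidef (α : ℝ) (hα1 : 1 < α) (hα2 : α < 2) (m : ℕ) :
    Matrix.PosSemidef (-(T0 α m)) := by
  apply diag_dom_posSemidef
  · intro i j
    show -(tCoeff α ((i : ℤ) - (j : ℤ)).natAbs) = -(tCoeff α ((j : ℤ) - (i : ℤ)).natAbs)
    congr 2
    omega
  · intro i
    have hdiag : (-(T0 α m)) i i = α := by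
      show -(tCoeff α ((i : ℤ) - (i : ℤ)).natAbs) = α
      simp [t_zero]
    rw [hdiag]
    have habs : ∀ j ∈ Finset.univ.erase i, |(-(T0 α m)) i j|
        = tCoeff α (((i : ℤ) - (j : ℤ)).natAbs) := by
      intro j hj
      have hne : j ≠ i := (Finset.mem_erase.mp hj).1
      have hd : 1 ≤ ((i : ℤ) - (j : ℤ)).natAbs := by
        have : (i : ℤ) ≠ (j : ℤ) := by
          simpa [Fin.ext_iff] using fun h => hne (Fin.ext (by exact_mod_cast h)).symm
        omega
      have hpos := t_pos α hα1 hα2 _ hd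
      show |(-(tCoeff α (((i : ℤ) - (j : ℤ)).natAbs)))| = _
      rw [abs_neg, abs_of_pos hpos]
    rw [Finset.sum_congr rfl habs]
    -- Now bound the sum of off-diagonal Toeplitz entries.
    have hm : 0 < m := i.pos
    have htnonneg : ∀ d ∈ Finset.Icc 1 (m - 1), 0 ≤ tCoeff α d := fun d hd =>
      le_of_lt (t_pos α hα1 hα2 d (Finset.mem_Icc.mp hd).1)
    -- split into j < i and j > i
    have hsplit : Finset.univ.erase i
        = (Finset.univ.filter fun j : Fin m => (j : ℕ) < (i : ℕ))
          ∪ (Finset.univ.filter fun j : Fin m => (i : ℕ) < (j : ℕ)) := by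
      ext j
      simp only [Finset.mem_erase, Finset.mem_union, Finset.mem_filter, Finset.mem_univ,
        true_and, and_true, ne_eq, Fin.ext_iff]
      omega
    have hdisj : Disjoint (Finset.univ.filter fun j : Fin m => (j : ℕ) < (i : ℕ))
        (Finset.univ.filter fun j : Fin m => (i : ℕ) < (j : ℕ)) := by
      rw [Finset.disjoint_left]
      intro a ha hb
      simp only [Finset.mem_filter] at ha hb
      omega
    rw [hsplit, Finset.sum_union hdisj]
    -- left sum equals sum over Icc 1 i.val
    have hleft : ∑ j ∈ Finset.univ.filter (fun j : Fin m => (j : ℕ) < (i : ℕ)),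
        tCoeff α (((i : ℤ) - (j : ℤ)).natAbs) = ∑ d ∈ Finset.Icc 1 (i : ℕ), tCoeff α d := by
      refine Finset.sum_nbij' (fun j => (i : ℕ) - (j : ℕ))
        (fun d => ⟨(i : ℕ) - d, lt_of_le_of_lt (Nat.sub_le _ _) i.isLt⟩)
        ?_ ?_ ?_ ?_ ?_
      · intro j hj; simp only [Finset.mem_filter] at hj
        simp only [Finset.mem_Icc]; omega
      · intro d hd; simp only [Finset.mem_Icc] at hd
        simp only [Finset.mem_filter, Finset.mem_univ, true_and]; omega
      · intro j hj; simp only [Finset.mem_filter] at hj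
        apply Fin.ext; simp only []; omega
      · intro d hd; simp only [Finset.mem_Icc] at hd
        simp only []; omega
      · intro j hj; simp only [Finset.mem_filter] at hj
        show tCoeff α (((i : ℤ) - (j : ℤ)).natAbs) = tCoeff α ((i : ℕ) - (j : ℕ))
        congr 1; omega
    have hright : ∑ j ∈ Finset.univ.filter (fun j : Fin m => (i : ℕ) < (j : ℕ)),
        tCoeff α (((i : ℤ) - (j : ℤ)).natAbs)
        = ∑ d ∈ Finset.Icc 1 (m - 1 - (i : ℕ)), tCoeff α d := by
      refine Finset.sum_nbij' (fun j => (j : ℕ) - (i : ℕ))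
        (fun d => ⟨((i : ℕ) + d) % m, Nat.mod_lt _ hm⟩)
        ?_ ?_ ?_ ?_ ?_
      · intro j hj; simp only [Finset.mem_filter] at hj
        have := j.isLt
        simp only [Finset.mem_Icc]; omega
      · intro d hd; simp only [Finset.mem_Icc] at hd
        have hlt : (i : ℕ) + d < m := by omega
        simp only [Finset.mem_filter, Finset.mem_univ, true_and]
        rw [Nat.mod_eq_of_lt hlt]; omega
      · intro j hj; simp only [Finset.mem_filter] at hj
        have hjlt := j.isLt
        have hlt : (i : ℕ) + ((j : ℕ) - (i : ℕ)) < m := by omega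
        apply Fin.ext
        show ((i : ℕ) + ((j : ℕ) - (i : ℕ))) % m = (j : ℕ)
        rw [Nat.mod_eq_of_lt hlt]; omega
      · intro d hd; simp only [Finset.mem_Icc] at hd
        have hlt : (i : ℕ) + d < m := by omega
        show ((i : ℕ) + d) % m - (i : ℕ) = d
        rw [Nat.mod_eq_of_lt hlt]; omega
      · intro j hj; simp only [Finset.mem_filter] at hj
        show tCoeff α (((i : ℤ) - (j : ℤ)).natAbs) = tCoeff α ((j : ℕ) - (i : ℕ))
        congr 1; omega
    rw [hleft, hright]
    have hsub1 : ∑ d ∈ Finset.Icc 1 (i : ℕ), tCoeff α d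
        ≤ ∑ d ∈ Finset.Icc 1 (m - 1), tCoeff α d := by
      apply Finset.sum_le_sum_of_subset_of_nonneg
      · apply Finset.Icc_subset_Icc_right; have := i.isLt; omega
      · intro d hd _; exact htnonneg d hd
    have hsub2 : ∑ d ∈ Finset.Icc 1 (m - 1 - (i : ℕ)), tCoeff α d
        ≤ ∑ d ∈ Finset.Icc 1 (m - 1), tCoeff α d := by
      apply Finset.sum_le_sum_of_subset_of_nonneg
      · apply Finset.Icc_subset_Icc_right; omega
      · intro d hd _; exact htnonneg d hd
    have hbound : 2 * ∑ d ∈ Finset.Icc 1 (m - 1), tCoeff α d ≤ α := by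
      rcases Nat.lt_or_ge m 2 with h2 | h2
      · have : m - 1 = 0 := by omega
        rw [this]
        simp [Finset.Icc_eq_empty_of_lt]
        linarith
      · rw [sum_t α (m - 1) (by omega)]
        have hSa := Sa_neg α hα1 hα2 m (by omega)
        have : m - 1 + 1 = m := by omega
        rw [this]
        linarith
    linarith
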